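/- Let G be a graph with κ(M[IAS(G)]) = n. Then the diameter of G is at most 2; that is, for every pair of distinct vertices v ≠ w, either v and w are adjacent or they have a common neighbor. -/

import Mathlib

open scoped ENat

variable {V : Type*} [Fintype V] [DecidableEq V]

/-- The column of the matrix `IAS(G) = (I | A | A+I)` indexed by `(v, i)`:
`i = 0` gives `φ(v)` (identity column), `i = 1` gives `χ(v)` (column of `A`),
`i = 2` gives `ψ(v)` (column of `A + I`). -/
def iasCol (A : Matrix V V (ZMod 2)) : V × Fin 3 → V → ZMod 2 :=
  fun p w =>
    if p.2 = 0 then (if w = p.1 then 1 else 0)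
    else if p.2 = 1 then A w p.1
    else A w p.1 + (if w = p.1 then 1 else 0)

/-- The rank of a subset of the ground set `W(G) = V × Fin 3` of the isotropic
matroid: the GF(2)-rank of the corresponding set of columns. -/
noncomputable def iasRank (A : Matrix V V (ZMod 2)) (S : Set (V × Fin 3)) : ℕ :=
  Module.finrank (ZMod 2) (Submodule.span (ZMod 2) (iasCol A '' S))

/-- The connectivity function `λ(S) = r(S) + r(W - S) - r(M)`. -/
noncomputable def iasLambda (A : Matrix V V (ZMod 2)) (S : Set (V × Fin 3)) : ℕ :=
  iasRank A S + iasRank A Sᶜ - iasRank A Set.univ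

/-- Independence in the isotropic matroid. -/
def iasIndep (A : Matrix V V (ZMod 2)) (S : Set (V × Fin 3)) : Prop :=
  LinearIndependent (ZMod 2) (fun s : S => iasCol A s.1)

/-- Circuits of the isotropic matroid: minimal dependent sets. -/
def iasCircuit (A : Matrix V V (ZMod 2)) (C : Set (V × Fin 3)) : Prop :=
  ¬ iasIndep A C ∧ ∀ S ⊂ C, iasIndep A S

/-- An ordinary `k`-separation: `λ(S) < k` and `|S|, |W - S| ≥ k`. -/
def OrdinarySep (A : Matrix V V (ZMod 2)) (k : ℕ) (S : Set (V × Fin 3)) : Prop :=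
  0 < k ∧ iasLambda A S < k ∧ k ≤ S.ncard ∧ k ≤ Sᶜ.ncard

/-- A cyclic `k`-separation: `λ(S) < k` and both `S` and `W - S` are dependent. -/
def CyclicSep (A : Matrix V V (ZMod 2)) (k : ℕ) (S : Set (V × Fin 3)) : Prop :=
  0 < k ∧ iasLambda A S < k ∧ ¬ iasIndep A S ∧ ¬ iasIndep A Sᶜ

/-- A vertical `k`-separation: `λ(S) < k` and `r(S), r(W - S) ≥ k`. -/
def VerticalSep (A : Matrix V V (ZMod 2)) (k : ℕ) (S : Set (V × Fin 3)) : Prop :=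
  0 < k ∧ iasLambda A S < k ∧ k ≤ iasRank A S ∧ k ≤ iasRank A Sᶜ

/-- `τ(M) = min {k : M has an ordinary k-separation}`, with `min ∅ = ∞`. -/
noncomputable def iasTau (A : Matrix V V (ZMod 2)) : ℕ∞ :=
  sInf {k : ℕ∞ | ∃ m : ℕ, (m : ℕ∞) = k ∧ ∃ S, OrdinarySep A m S}

/-- `κ*(M) = min ({k : M has a cyclic k-separation} ∪ {|W| - r(M)})`. -/
noncomputable def iasKappaStar (A : Matrix V V (ZMod 2)) : ℕ :=
  sInf ({k : ℕ | ∃ S, CyclicSep A k S} ∪ {3 * Fintype.card V - iasRank A Set.univ})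

/-- `κ(M) = min ({k : M has a vertical k-separation} ∪ {r(M)})`. -/
noncomputable def iasKappa (A : Matrix V V (ZMod 2)) : ℕ :=
  sInf ({k : ℕ | ∃ S, VerticalSep A k S} ∪ {iasRank A Set.univ})

/-- The simple graph underlying a looped simple graph given by its adjacency matrix. -/
def toSimpleGraph (A : Matrix V V (ZMod 2)) : SimpleGraph V where
  Adj v w := v ≠ w ∧ A v w = 1 ∧ A w v = 1
  symm := ⟨fun v w ⟨h1, h2, h3⟩ => ⟨Ne.symm h1, h3, h2⟩⟩
  loopless := ⟨fun v h => h.1 rfl⟩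

/-- The open neighborhood `N_G(v)`. -/
def nbhd (A : Matrix V V (ZMod 2)) (v : V) : Set V := {u | u ≠ v ∧ A v u = 1}

/-- `v` is a pendant vertex: `N_G(v) = {w}` for some `w`. -/
def IsPendant (A : Matrix V V (ZMod 2)) (v : V) : Prop := ∃ w, nbhd A v = {w}

/-- `G` has a pair of twin vertices: `v ≠ w` with `N_G(v) - {w} = N_G(w) - {v}`. -/
def HasTwins (A : Matrix V V (ZMod 2)) : Prop :=
  ∃ v w, v ≠ w ∧ nbhd A v \ {w} = nbhd A w \ {v}

/-- The cut-rank `c_G(X)`: the GF(2)-rank of the submatrix `A[V - X, X]`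
(columns indexed by `X`, rows indexed by `V - X`). -/
noncomputable def cutRank (A : Matrix V V (ZMod 2)) (X : Set V) : ℕ :=
  Module.finrank (ZMod 2)
    (Submodule.span (ZMod 2) ((fun x : V => fun w : ↥(Xᶜ) => A w.1 x) '' X))

/-- `τ_G(X) = ⋃_{x ∈ X} τ_G(x)`, the union of the vertex triples of members of `X`. -/
def tauSet (X : Set V) : Set (V × Fin 3) := {p | p.1 ∈ X}

/-- Loop complementation at `v`. -/
def loopComp (A : Matrix V V (ZMod 2)) (v : V) : Matrix V V (ZMod 2) :=
  fun x y => A x y + if x = v ∧ y = v then 1 else 0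

/-- Simple local complementation at `v`. -/
def simpleLocalComp (A : Matrix V V (ZMod 2)) (v : V) : Matrix V V (ZMod 2) :=
  fun x y => A x y +
    if x ≠ y ∧ (x ≠ v ∧ A v x = 1) ∧ (y ≠ v ∧ A v y = 1) then 1 else 0

/-- Non-simple local complementation at `v`. -/
def nonSimpleLocalComp (A : Matrix V V (ZMod 2)) (v : V) : Matrix V V (ZMod 2) :=
  fun x y => simpleLocalComp A v x y + if x = y ∧ x ≠ v ∧ A v x = 1 then 1 else 0

/-- One local move. -/
def LocalStep (A B : Matrix V V (ZMod 2)) : Prop :=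
  ∃ v, B = loopComp A v ∨ B = simpleLocalComp A v ∨ B = nonSimpleLocalComp A v

/-- Local equivalence: a finite sequence of loop complementations and
(simple or non-simple) local complementations. -/
def LocallyEquiv (A B : Matrix V V (ZMod 2)) : Prop :=
  Relation.ReflTransGen LocalStep A B

/-- `G` has a split: a bipartition `(V₁, V₂)` of `V` with `|V₁|, |V₂| ≥ 2` such that the
GF(2)-rank of `A[V₁, V₂]` is at most 1. -/
def HasSplit (A : Matrix V V (ZMod 2)) : Prop :=
  ∃ X : Set V, 2 ≤ X.ncard ∧ 2 ≤ Xᶜ.ncard ∧ cutRank A X ≤ 1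

/-- A transverse circuit: a circuit of the isotropic matroid meeting each
vertex triple at most once. -/
def IsTransverseCircuit (A : Matrix V V (ZMod 2)) (C : Set (V × Fin 3)) : Prop :=
  iasCircuit A C ∧ ∀ p ∈ C, ∀ q ∈ C, p.1 = q.1 → p = q

/-- An isotropic `k`-separation of `G`: `|X|, |V - X| ≥ k` and `c_G(X) < k`. -/
def IsotropicSep (A : Matrix V V (ZMod 2)) (k : ℕ) (X : Set V) : Prop :=
  k ≤ X.ncard ∧ k ≤ Xᶜ.ncard ∧ cutRank A X < k

/-- The isotropic connectivity `κ_B(G)`, with `min ∅ = ∞`. -/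
noncomputable def kappaB (A : Matrix V V (ZMod 2)) : ℕ∞ :=
  sInf {j : ℕ∞ | ∃ k : ℕ, (k : ℕ∞) = j ∧ ∃ X, IsotropicSep A k X}

/-- The 5-cycle `C₅`. -/
def C5mat : Matrix (Fin 5) (Fin 5) (ZMod 2) :=
  fun i j => if (i.val + 1) % 5 = j.val ∨ (j.val + 1) % 5 = i.val then 1 else 0

/-- The wheel `W₅` : a 5-cycle on `{0,…,4}` plus a hub `5` adjacent to all. -/
def W5mat : Matrix (Fin 6) (Fin 6) (ZMod 2) :=
  fun i j =>
    if (i.val = 5 ∧ j.val ≠ 5) ∨ (j.val = 5 ∧ i.val ≠ 5) then 1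
    else if i.val ≠ 5 ∧ j.val ≠ 5 ∧ ((i.val + 1) % 5 = j.val ∨ (j.val + 1) % 5 = i.val) then 1
    else 0

section AuxStmt19

open Module Submodule

private lemma zmod2_ne_one {a : ZMod 2} (h : a ≠ 1) : a = 0 := by revert h; revert a; decide

private lemma zmod2_ne_zero {a : ZMod 2} (h : a ≠ 0) : a = 1 := by revert h; revert a; decide

private lemma tauSet_compl (X : Set V) : tauSet Xᶜ = (tauSet X)ᶜ := by
  ext p; simp [tauSet]

private lemma mem_span_of_e {U : Submodule (ZMod 2) (V → ZMod 2)} (g : V → ZMod 2)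
    (hg : ∀ u : V, g u ≠ 0 → (fun t => if t = u then (1 : ZMod 2) else 0) ∈ U) : g ∈ U := by
  classical
  have hrep : g = ∑ u : V, g u • (fun t => if t = u then (1 : ZMod 2) else 0) := by
    funext t
    rw [Finset.sum_apply]
    simp only [Pi.smul_apply, smul_eq_mul, mul_ite, mul_one, mul_zero]
    rw [Finset.sum_ite_eq]
    simp
  rw [hrep]
  refine Submodule.sum_mem _ fun u _ => ?_
  by_cases h : g u = 0
  · rw [h, zero_smul]; exact U.zero_mem
  · exact Submodule.smul_mem _ _ (hg u h)

private lemma cutRank_eq_rank (A : Matrix V V (ZMod 2)) (X : Set V)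
    [Fintype ↥X] [Fintype ↥Xᶜ] :
    cutRank A X = (Matrix.of fun (w : ↥Xᶜ) (x : ↥X) => A w.1 x.1).rank := by
  rw [Matrix.rank_eq_finrank_span_cols]
  unfold cutRank
  rw [Set.image_eq_range]
  rfl

private lemma cutRank_eq_rank' (A : Matrix V V (ZMod 2)) (X Y : Set V) (h : Y = Xᶜ)
    [Fintype ↥X] [Fintype ↥Y] :
    cutRank A X = (Matrix.of fun (w : ↥Y) (x : ↥X) => A w.1 x.1).rank := by
  subst h
  exact cutRank_eq_rank A X

private lemma cutRank_compl (A : Matrix V V (ZMod 2)) (hA : A.IsSymm) (X : Set V) :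
    cutRank A Xᶜ = cutRank A X := by
  classical
  haveI : Fintype ↥X := Fintype.ofFinite _
  haveI : Fintype ↥Xᶜ := Fintype.ofFinite _
  rw [cutRank_eq_rank' A Xᶜ X (compl_compl X).symm, cutRank_eq_rank A X]
  have hT : (Matrix.of fun (w : ↥X) (x : ↥Xᶜ) => A w.1 x.1)
      = Matrix.transpose (Matrix.of fun (w : ↥Xᶜ) (x : ↥X) => A w.1 x.1) := by
    ext w x
    exact (hA.apply w.1 x.1).symm
  rw [hT, Matrix.rank_transpose]

private lemma cutRank_succ_le {A : Matrix V V (ZMod 2)} {X : Set V} {x₀ : V}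
    (hx : x₀ ∈ X) (hz : ∀ w : ↥Xᶜ, A w.1 x₀ = 0) : cutRank A X + 1 ≤ X.ncard := by
  classical
  have h1 : 0 < X.ncard := (Set.ncard_pos (Set.toFinite X)).mpr ⟨x₀, hx⟩
  have hmain : cutRank A X ≤ X.ncard - 1 := by
    unfold cutRank
    set f : V → ↥Xᶜ → ZMod 2 := fun x w => A w.1 x with hf
    have hsub : Submodule.span (ZMod 2) (f '' X) ≤ Submodule.span (ZMod 2) (f '' (X \ {x₀})) := by
      rw [Submodule.span_le]
      rintro _ ⟨x, hxX, rfl⟩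
      simp only [SetLike.mem_coe]
      by_cases hxx : x = x₀
      · subst hxx
        have h0 : f x = 0 := funext hz
        rw [h0]; exact Submodule.zero_mem _
      · exact Submodule.subset_span ⟨x, ⟨hxX, hxx⟩, rfl⟩
    refine le_trans (Submodule.finrank_mono hsub) ?_
    haveI : Fintype ↥(f '' (X \ {x₀})) := Fintype.ofFinite _
    refine le_trans (finrank_span_le_card _) ?_
    rw [Set.toFinset_card]
    calc Fintype.card ↥(f '' (X \ {x₀})) = (f '' (X \ {x₀})).ncard := by
          rw [← Nat.card_coe_set_eq, Nat.card_eq_fintype_card]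
      _ ≤ (X \ {x₀}).ncard := Set.ncard_image_le (Set.toFinite _)
      _ = X.ncard - 1 := Set.ncard_diff_singleton_of_mem hx
  omega

set_option synthInstance.maxHeartbeats 1000000 in
set_option maxHeartbeats 1000000 in
private lemma iasRank_tauSet (A : Matrix V V (ZMod 2)) (X : Set V) :
    iasRank A (tauSet X) = X.ncard + cutRank A X := by
  classical
  haveI : Fintype ↥X := Fintype.ofFinite _
  haveI : Fintype ↥Xᶜ := Fintype.ofFinite _
  set f : V → ↥Xᶜ → ZMod 2 := fun x w => A w.1 x with hf
  set π : (V → ZMod 2) →ₗ[ZMod 2] (↥Xᶜ → ZMod 2) :=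
    LinearMap.funLeft (ZMod 2) (ZMod 2) Subtype.val with hπ
  set U : Submodule (ZMod 2) (V → ZMod 2) :=
    Submodule.span (ZMod 2) (iasCol A '' tauSet X) with hU
  have hiasE : ∀ u : V, iasCol A (u, 0) = fun t => if t = u then (1 : ZMod 2) else 0 := by
    intro u; funext t; simp [iasCol]
  have he : ∀ u ∈ X, (fun t => if t = u then (1 : ZMod 2) else 0) ∈ U := by
    intro u hu
    exact (hiasE u) ▸ Submodule.subset_span ⟨(u, 0), hu, rfl⟩
  have hker : LinearMap.ker π ≤ U := by
    intro g hg
    refine mem_span_of_e g fun u hu => ?_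
    by_cases huX : u ∈ X
    · exact he u huX
    · exfalso
      apply hu
      have := congrFun (LinearMap.mem_ker.mp hg) ⟨u, huX⟩
      simpa [hπ, LinearMap.funLeft] using this
  have hrange : LinearMap.range (π ∘ₗ U.subtype) = Submodule.span (ZMod 2) (f '' X) := by
    rw [LinearMap.range_comp, Submodule.range_subtype, hU, Submodule.map_span]
    apply le_antisymm
    · rw [Submodule.span_le]
      rintro _ ⟨_, ⟨⟨u, i⟩, hp, rfl⟩, rfl⟩
      have hp' : u ∈ X := hp
      simp only [SetLike.mem_coe]
      by_cases hi0 : i = 0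
      · subst hi0
        have h0 : π (iasCol A (u, 0)) = 0 := by
          funext w
          have hwu : (w : V) ≠ u := fun h => w.2 (h ▸ hp')
          simp [hπ, LinearMap.funLeft, iasCol, hwu]
        rw [h0]; exact Submodule.zero_mem _
      · by_cases hi1 : i = 1
        · subst hi1
          have h1 : π (iasCol A (u, 1)) = f u := by
            funext w
            simp [hπ, LinearMap.funLeft, iasCol, hf]
          rw [h1]; exact Submodule.subset_span ⟨u, hp', rfl⟩
        · have hi2 : i = 2 := by
            clear hp
            revert hi0 hi1; revert i; decide
          subst hi2
          have h2 : π (iasCol A (u, 2)) = f u := by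
            funext w
            have hwu : (w : V) ≠ u := fun h => w.2 (h ▸ hp')
            simp [hπ, LinearMap.funLeft, iasCol, hf, hwu]
          rw [h2]; exact Submodule.subset_span ⟨u, hp', rfl⟩
    · rw [Submodule.span_le]
      rintro _ ⟨u, hu, rfl⟩
      simp only [SetLike.mem_coe]
      refine Submodule.subset_span ⟨iasCol A (u, 1),
        Set.mem_image_of_mem _ (show ((u, (1 : Fin 3)) : V × Fin 3) ∈ tauSet X from hu), ?_⟩
      funext w
      simp [hπ, LinearMap.funLeft, iasCol, hf]
  have hkerc : LinearMap.ker (π ∘ₗ U.subtype) = (LinearMap.ker π).comap U.subtype :=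
    LinearMap.ker_comp _ _
  have hkerfr : finrank (ZMod 2) (LinearMap.ker (π ∘ₗ U.subtype)) = X.ncard := by
    rw [hkerc, LinearEquiv.finrank_eq (Submodule.comapSubtypeEquivOfLe hker)]
    have hsurj : Function.Surjective π :=
      LinearMap.funLeft_surjective_of_injective _ _ _ Subtype.val_injective
    have h1 := LinearMap.finrank_range_add_finrank_ker π
    rw [LinearMap.range_eq_top.mpr hsurj, finrank_top, Module.finrank_pi, Module.finrank_pi] at h1
    have h2 : X.ncard + Xᶜ.ncard = Fintype.card V := by
      rw [Set.ncard_add_ncard_compl, Nat.card_eq_fintype_card]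
    have h4 : X.ncard = Fintype.card ↥X := by
      rw [← Nat.card_coe_set_eq, Nat.card_eq_fintype_card]
    have h5 : Xᶜ.ncard = Fintype.card ↥Xᶜ := by
      rw [← Nat.card_coe_set_eq, Nat.card_eq_fintype_card]
    omega
  have hcomp := LinearMap.finrank_range_add_finrank_ker (π ∘ₗ U.subtype)
  rw [hrange, hkerfr] at hcomp
  have hfin : iasRank A (tauSet X) = finrank (ZMod 2) U := rfl
  have hcut : cutRank A X = finrank (ZMod 2) (Submodule.span (ZMod 2) (f '' X)) := rfl
  omega

private lemma iasRank_univ (A : Matrix V V (ZMod 2)) :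
    iasRank A Set.univ = Fintype.card V := by
  classical
  have hspan : Submodule.span (ZMod 2) (iasCol A '' Set.univ) = ⊤ := by
    rw [eq_top_iff]
    intro g _
    refine mem_span_of_e g fun u _ => ?_
    have hiasE : iasCol A (u, 0) = fun t => if t = u then (1 : ZMod 2) else 0 := by
      funext t; simp [iasCol]
    exact hiasE ▸ Submodule.subset_span ⟨(u, 0), Set.mem_univ _, rfl⟩
  unfold iasRank
  rw [hspan, finrank_top, Module.finrank_pi]

end AuxStmt19

theorem stmt19 (A : Matrix V V (ZMod 2)) (hA : A.IsSymm)
    (h : iasKappa A = Fintype.card V) :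
    ∀ v w : V, v ≠ w →
      A v w = 1 ∨ ∃ u, u ≠ v ∧ u ≠ w ∧ A v u = 1 ∧ A w u = 1 := by
  classical
  intro v w hvw
  by_contra hcon
  push_neg at hcon
  obtain ⟨hvw1, hno⟩ := hcon
  have hAvw : A v w = 0 := zmod2_ne_one hvw1
  set X : Set V := {u | u = v ∨ (u ≠ v ∧ A v u = 1)} with hX
  have hvX : v ∈ X := Or.inl rfl
  have hwX : w ∈ Xᶜ := by
    rintro (rfl | ⟨-, h1⟩)
    · exact hvw rfl
    · exact hvw1 h1
  -- column v of A[Xᶜ, X] is zero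
  have hz1 : ∀ u : ↥Xᶜ, A u.1 v = 0 := by
    intro u
    rw [hA.apply v u.1]
    refine zmod2_ne_one fun h1 => ?_
    refine u.2 (Or.inr ⟨fun he => u.2 ?_, h1⟩)
    rw [he]; exact hvX
  -- column w of A[Xᶜᶜ, Xᶜ] is zero
  have hz2 : ∀ u : ↥(Xᶜᶜ), A u.1 w = 0 := by
    intro u
    have huX : u.1 ∈ X := by simpa using u.2
    rcases huX with huv' | ⟨huv, h1⟩
    · rw [huv']; exact hAvw
    · refine zmod2_ne_one fun h2 => ?_
      have huw : u.1 ≠ w := by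
        intro he
        apply hvw1
        rw [he] at h1
        exact h1
      exact hno u.1 huv huw h1 ((hA.apply w u.1).symm.trans h2)
  have hc1 : cutRank A X + 1 ≤ X.ncard := cutRank_succ_le hvX hz1
  have hsym : cutRank A Xᶜ = cutRank A X := cutRank_compl A hA X
  have hc2 : cutRank A X + 1 ≤ Xᶜ.ncard := by
    have := cutRank_succ_le hwX hz2
    omega
  set c := cutRank A X with hc
  set k := min X.ncard Xᶜ.ncard + c with hk
  have hcard : X.ncard + Xᶜ.ncard = Fintype.card V := by
    rw [Set.ncard_add_ncard_compl, Nat.card_eq_fintype_card]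
  have hrS : iasRank A (tauSet X) = X.ncard + c := iasRank_tauSet A X
  have hrSc : iasRank A (tauSet X)ᶜ = Xᶜ.ncard + c := by
    rw [← tauSet_compl, iasRank_tauSet A Xᶜ, hsym]
  have hlam : iasLambda A (tauSet X) = 2 * c := by
    unfold iasLambda
    rw [hrS, hrSc, iasRank_univ]
    omega
  have hsep : VerticalSep A k (tauSet X) := by
    refine ⟨by omega, by omega, by omega, by omega⟩
  have hle : iasKappa A ≤ k :=
    Nat.sInf_le (Or.inl ⟨_, hsep⟩)
  rw [h] at hle
  omega
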